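/- For every positive integer n, the minimum number of quowers needed to cover the full toroidal board (Z/4nZ)² equals 2n + 1. -/

import Mathlib

def diag (n : ℕ) (p : ZMod n × ZMod n) : Set (ZMod n × ZMod n) :=
  {q | ∃ t : ZMod n, q = (p.1 + t, p.2 + t)}

def horiz (n : ℕ) (p : ZMod n × ZMod n) : Set (ZMod n × ZMod n) :=
  {q | ∃ t : ZMod n, q = (t, p.2)}

def vert (n : ℕ) (p : ZMod n × ZMod n) : Set (ZMod n × ZMod n) :=
  {q | ∃ t : ZMod n, q = (p.1, t)}

def quower (n : ℕ) (p : ZMod n × ZMod n) : Set (ZMod n × ZMod n) :=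
  diag n p ∪ horiz n p ∪ vert n p

noncomputable def xi (n : ℕ) : ℕ :=
  sInf {k | ∃ X : Set (ZMod n × ZMod n), X.ncard = k ∧ (⋃ x ∈ X, quower n x) = Set.univ}

noncomputable def xiD (n : ℕ) : ℕ :=
  sInf {k | ∃ X : Set (ZMod n × ZMod n), X.ncard = k ∧
    Set.univ \ diag n (1, 1) ⊆ ⋃ x ∈ X, quower n x}

lemma mem_quower {m : ℕ} (x z : ZMod m × ZMod m) :
    z ∈ quower m x ↔ z.1 - z.2 = x.1 - x.2 ∨ z.2 = x.2 ∨ z.1 = x.1 := by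
  constructor
  · rintro ((⟨t, rfl⟩ | ⟨t, rfl⟩) | ⟨t, rfl⟩)
    · left; ring
    · right; left; rfl
    · right; right; rfl
  · rintro (h | h | h)
    · exact Or.inl <| Or.inl ⟨z.2 - x.2, by
        have h1 : z.1 = x.1 + (z.2 - x.2) := by linear_combination h
        exact Prod.ext h1 (by ring)⟩
    · exact Or.inl <| Or.inr ⟨z.1, Prod.ext rfl h⟩
    · exact Or.inr ⟨z.2, Prod.ext h rfl⟩

def xseq (n k : ℕ) : ℕ := if k = 0 then 0 else if k % 2 = 1 then (k+1)/2 else 2*n - k/2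

lemma xseq_lt {n k : ℕ} (hn : 0 < n) (hk : k < 2*n) : xseq n k < 2*n := by
  unfold xseq; split_ifs <;> omega

lemma xseq_inj {n k l : ℕ} (hn : 0 < n) (hk : k < 2*n) (hl : l < 2*n)
    (h : xseq n k = xseq n l) : k = l := by
  unfold xseq at h; split_ifs at h <;> omega

lemma xseq_surj {n v : ℕ} (hn : 0 < n) (hv : v < 2*n) : ∃ k, k < 2*n ∧ xseq n k = v := by
  rcases Nat.eq_zero_or_pos v with rfl | hv0
  · exact ⟨0, by omega, by simp [xseq]⟩
  rcases le_or_gt v n with hvn | hvn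
  · exact ⟨2*v-1, by omega, by unfold xseq; split_ifs <;> (try simp_all) <;> omega⟩
  · exact ⟨2*(2*n-v), by omega, by unfold xseq; split_ifs <;> (try simp_all) <;> omega⟩

lemma helper1 {m a b c : ℕ} (h : a = b + c) : (a : ZMod m) - b = c := by
  subst h; push_cast; ring

lemma helper2 {m a b c : ℕ} (h : a + m = b + c) : (a : ZMod m) - b = c := by
  have h2 : ((a + m : ℕ) : ZMod m) = ((b + c : ℕ) : ZMod m) := by rw [h]
  push_cast [ZMod.natCast_self] at h2
  linear_combination h2

lemma diff_lemma {n d : ℕ} (hn : 0 < n) (h1 : 1 ≤ d) (h2 : d < 2*n) :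
    ∃ k, k < 2*n ∧
      ((2 * xseq n ((k+1) % (2*n)) + 1 : ℕ) : ZMod (4*n)) - ((2 * xseq n k + 1 : ℕ) : ZMod (4*n))
        = ((2*d : ℕ) : ZMod (4*n)) := by
  rcases Nat.even_or_odd d with ⟨j, rfl⟩ | ⟨j, rfl⟩
  · refine ⟨2*n-1-2*j, by omega, ?_⟩
    rw [show (2*n-1-2*j+1) % (2*n) = 2*n - 2*j by rw [Nat.mod_eq_of_lt (by omega)]; omega]
    rw [show xseq n (2*n-2*j) = n + j by unfold xseq; split_ifs <;> (try simp_all) <;> omega]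
    rw [show xseq n (2*n-1-2*j) = n - j by unfold xseq; split_ifs <;> (try simp_all) <;> omega]
    exact helper1 (by omega)
  · rcases Nat.eq_zero_or_pos j with rfl | h3
    · refine ⟨0, by omega, ?_⟩
      rw [show (0+1) % (2*n) = 1 by rw [Nat.mod_eq_of_lt (by omega)]]
      rw [show xseq n 1 = 1 by simp [xseq]]
      rw [show xseq n 0 = 0 by simp [xseq]]
      exact helper1 (by omega)
    · refine ⟨2*j, by omega, ?_⟩
      rw [show (2*j+1) % (2*n) = 2*j+1 by rw [Nat.mod_eq_of_lt (by omega)]]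
      rw [show xseq n (2*j+1) = j+1 by unfold xseq; split_ifs <;> (try simp_all) <;> omega]
      rw [show xseq n (2*j) = 2*n - j by unfold xseq; split_ifs <;> (try simp_all) <;> omega]
      exact helper2 (by omega)

lemma upper (n : ℕ) (hn : 0 < n) :
    ∃ X : Set (ZMod (4*n) × ZMod (4*n)), X.ncard = 2*n+1 ∧
      (⋃ x ∈ X, quower (4*n) x) = Set.univ := by
  haveI : NeZero (4*n) := ⟨by omega⟩
  set m := 4*n with hm
  let P : ℕ → ZMod m × ZMod m := fun k =>
    (((2 * xseq n ((k+1) % (2*n)) + 1 : ℕ) : ZMod m), ((2 * xseq n k + 1 : ℕ) : ZMod m))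
  let pt : ZMod m × ZMod m := (((4*n-2 : ℕ) : ZMod m), ((4*n-2 : ℕ) : ZMod m))
  let Xf : Finset (ZMod m × ZMod m) := insert pt ((Finset.range (2*n)).image P)
  have sndval : ∀ k, k < 2*n → ((2 * xseq n k + 1 : ℕ) : ZMod m).val = 2 * xseq n k + 1 := by
    intro k hk
    exact ZMod.val_cast_of_lt (by have := xseq_lt hn hk; omega)
  have hinj : Set.InjOn P (Finset.range (2*n)) := by
    intro k hk l hl h
    simp only [Finset.coe_range, Set.mem_Iio] at hk hl
    have h2 := congrArg (fun z : ZMod m × ZMod m => z.2.val) h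
    simp only [P, sndval k hk, sndval l hl] at h2
    exact xseq_inj hn hk hl (by omega)
  have hptval : ((4*n-2 : ℕ) : ZMod m).val = 4*n-2 := ZMod.val_cast_of_lt (by omega)
  have hpt : pt ∉ (Finset.range (2*n)).image P := by
    intro h
    obtain ⟨k, hk, hPk⟩ := Finset.mem_image.mp h
    rw [Finset.mem_range] at hk
    have h2 := congrArg (fun z : ZMod m × ZMod m => z.2.val) hPk
    simp only [P, pt, sndval k hk, hptval] at h2
    omega
  have hcard : Xf.card = 2*n+1 := by
    rw [Finset.card_insert_of_notMem hpt, Finset.card_image_of_injOn hinj,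
      Finset.card_range]
  refine ⟨↑Xf, by rw [Set.ncard_coe_finset, hcard], ?_⟩
  rw [Set.eq_univ_iff_forall]
  rintro ⟨p, q⟩
  simp only [Set.mem_iUnion, exists_prop, Finset.mem_coe]
  have hq : ((q.val : ℕ) : ZMod m) = q := by rw [ZMod.natCast_val, ZMod.cast_id]
  have hp : ((p.val : ℕ) : ZMod m) = p := by rw [ZMod.natCast_val, ZMod.cast_id]
  have hqlt : q.val < m := ZMod.val_lt q
  have hplt : p.val < m := ZMod.val_lt p
  rcases Nat.even_or_odd q.val with hqe | ⟨v, hv⟩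
  · rcases Nat.even_or_odd p.val with hpe | ⟨v, hv⟩
    · -- both even : diagonal
      rcases hqe with ⟨a, ha⟩
      rcases hpe with ⟨b, hb⟩
      by_cases hpq : p = q
      · refine ⟨pt, Finset.mem_insert_self _ _, ?_⟩
        rw [mem_quower]
        left
        simp only [pt]
        rw [hpq]; ring
      · set e : ℕ := if q.val ≤ p.val then p.val - q.val else p.val + m - q.val with he
        have hpe : p - q = (e : ZMod m) := by
          rw [← hp, ← hq]
          rcases le_or_gt q.val p.val with h | h
          · rw [he, if_pos h]; exact helper1 (by omega)
          · rw [he, if_neg (by omega)]; exact helper2 (by omega)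
        have heven : e % 2 = 0 := by rw [he]; split_ifs <;> omega
        have hepos : 0 < e := by
          rcases Nat.eq_zero_or_pos e with h0 | h; swap; exact h
          exfalso
          apply hpq
          have : p - q = 0 := by rw [hpe, h0]; simp
          linear_combination this
        have helt : e < m := by rw [he]; split_ifs <;> omega
        obtain ⟨k, hk, hdk⟩ := diff_lemma hn (d := e/2) (by omega) (by omega)
        refine ⟨P k, Finset.mem_insert_of_mem (Finset.mem_image_of_mem P
          (Finset.mem_range.mpr hk)), ?_⟩
        rw [mem_quower]
        left
        show p - q = _
        rw [hpe, hdk]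
        congr 1
        omega
    · -- p odd : vertical
      obtain ⟨j, hj, hxj⟩ := xseq_surj hn (v := v) (by omega)
      set k := if j = 0 then 2*n-1 else j - 1 with hk
      have hklt : k < 2*n := by rw [hk]; split_ifs <;> omega
      have hkj : (k+1) % (2*n) = j := by
        rw [hk]; split_ifs with h
        · rw [show 2*n-1+1 = 2*n by omega, Nat.mod_self]; omega
        · rw [Nat.mod_eq_of_lt (by omega)]; omega
      refine ⟨P k, Finset.mem_insert_of_mem (Finset.mem_image_of_mem P
        (Finset.mem_range.mpr hklt)), ?_⟩
      rw [mem_quower]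
      right; right
      show p = ((2 * xseq n ((k+1) % (2*n)) + 1 : ℕ) : ZMod m)
      rw [hkj, hxj, ← hp, hv]
  · -- q odd : horizontal
    obtain ⟨k, hk, hxk⟩ := xseq_surj hn (v := v) (by omega)
    refine ⟨P k, Finset.mem_insert_of_mem (Finset.mem_image_of_mem P
      (Finset.mem_range.mpr hk)), ?_⟩
    rw [mem_quower]
    right; left
    show q = ((2 * xseq n k + 1 : ℕ) : ZMod m)
    rw [hxk, ← hq, hv]

section
variable (n : ℕ)

def Hfin (n : ℕ) : Finset (ZMod (4*n)) := (Finset.range (2*n)).image (fun j => ((2*j : ℕ) : ZMod (4*n)))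

variable (hn : 0 < n)

def eps (n : ℕ) : ZMod (4*n) →+* ZMod 2 := ZMod.castHom (show (2:ℕ) ∣ 4*n from ⟨2*n, by ring⟩) (ZMod 2)

lemma eps_natCast (a : ℕ) : eps n ((a : ℕ) : ZMod (4*n)) = (a : ZMod 2) := by
  simp [eps]

include hn

lemma mem_Hfin {x : ZMod (4*n)} : x ∈ Hfin n ↔ eps n x = 0 := by
  haveI : NeZero (4*n) := ⟨by omega⟩
  constructor
  · intro hx
    obtain ⟨j, _, rfl⟩ := Finset.mem_image.mp hx
    rw [eps_natCast, ZMod.natCast_eq_zero_iff]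
    exact ⟨j, rfl⟩
  · intro hx
    have hval : ((x.val : ℕ) : ZMod (4*n)) = x := by rw [ZMod.natCast_val, ZMod.cast_id]
    rw [← hval, eps_natCast] at hx
    have h2 : 2 ∣ x.val := by
      rwa [ZMod.natCast_eq_zero_iff] at hx
    obtain ⟨j, hj⟩ := h2
    have hjlt : j < 2*n := by have := ZMod.val_lt x; omega
    rw [← hval, hj]
    exact Finset.mem_image.mpr ⟨j, Finset.mem_range.mpr hjlt, rfl⟩

lemma card_Hfin : (Hfin n).card = 2*n := by
  haveI : NeZero (4*n) := ⟨by omega⟩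
  rw [Hfin, Finset.card_image_of_injOn, Finset.card_range]
  intro a ha b hb h
  simp only [Finset.coe_range, Set.mem_Iio] at ha hb
  have ha' := ZMod.val_cast_of_lt (show 2*a < 4*n by omega)
  have hb' := ZMod.val_cast_of_lt (show 2*b < 4*n by omega)
  have := congrArg ZMod.val h
  rw [ha', hb'] at this
  omega

lemma sum_Hfin : ∑ x ∈ Hfin n, x = ((2*n : ℕ) : ZMod (4*n)) := by
  haveI : NeZero (4*n) := ⟨by omega⟩
  rw [Hfin, Finset.sum_image]
  · have : ∑ j ∈ Finset.range (2*n), ((2*j : ℕ) : ZMod (4*n))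
        = ((∑ j ∈ Finset.range (2*n), 2*j : ℕ) : ZMod (4*n)) := by push_cast; ring
    rw [this]
    obtain ⟨k, rfl⟩ : ∃ k, n = k+1 := ⟨n-1, by omega⟩
    have hs : (∑ j ∈ Finset.range (2*(k+1)), 2*j) = 2*(k+1) + 4*(k+1)*k := by
      rw [← Finset.mul_sum]
      have h := Finset.sum_range_id_mul_two (2*(k+1))
      rw [show 2*(k+1)-1 = 2*k+1 by omega] at h
      nlinarith [h]
    rw [hs, Nat.cast_add, Nat.cast_mul (4*(k+1)) k, ZMod.natCast_self, zero_mul, add_zero]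
  · intro a ha b hb h
    simp only [Finset.mem_coe, Finset.mem_range] at ha hb
    have ha' := ZMod.val_cast_of_lt (show 2*a < 4*n by omega)
    have hb' := ZMod.val_cast_of_lt (show 2*b < 4*n by omega)
    have := congrArg ZMod.val h
    rw [ha', hb'] at this
    omega


omit hn in
lemma img_img (T : Finset (ZMod (4*n))) (a b : ZMod (4*n)) :
    (T.image (· + a)).image (· + b) = T.image (· + (a+b)) := by
  rw [Finset.image_image]
  congr 1
  funext x
  simp [Function.comp, add_assoc]

omit hn in
lemma img_zero (T : Finset (ZMod (4*n))) : T.image (· + (0 : ZMod (4*n))) = T := by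
  simp

lemma stab_lemma (T : Finset (ZMod (4*n))) (hT : T.card = 2*n) (t0 : ZMod (4*n))
    (ht0 : t0 ∈ T) (W : Finset (ZMod (4*n))) (hWc : 2*n ≤ W.card)
    (hW : ∀ w ∈ W, T.image (· + w) = T) :
    T = (Hfin n).image (fun h => t0 + h) := by
  haveI : NeZero (4*n) := ⟨by omega⟩
  classical
  set St := Finset.univ.filter (fun h => T.image (· + h) = T) with hSt
  have hmemSt : ∀ h, h ∈ St ↔ T.image (· + h) = T := by
    intro h; simp [hSt]
  have hWSt : W ⊆ St := fun w hw => (hmemSt w).mpr (hW w hw)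
  have hStc : 2*n ≤ St.card := le_trans hWc (Finset.card_le_card hWSt)
  have hadd : ∀ h1 ∈ St, ∀ h2 ∈ St, h1 + h2 ∈ St := by
    intro h1 h1m h2 h2m
    rw [hmemSt] at *
    rw [← img_img n, h1m, h2m]
  have hneg : ∀ h ∈ St, -h ∈ St := by
    intro h hm
    rw [hmemSt] at *
    have := congrArg (fun s => s.image (· + (-h))) hm
    rw [img_img n] at this
    rw [add_neg_cancel, img_zero] at this
    exact this.symm
  have hmapsto : ∀ h ∈ St, t0 + h ∈ T := by
    intro h hm
    rw [hmemSt] at hm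
    rw [← hm]
    exact Finset.mem_image_of_mem _ ht0
  have hStle : St.card ≤ 2*n := by
    rw [← hT]
    exact Finset.card_le_card_of_injOn (fun h => t0 + h) hmapsto
      (fun a _ b _ h => by simpa using h)
  have hStcard : St.card = 2*n := le_antisymm hStle hStc
  have hTeq : T = St.image (fun h => t0 + h) := by
    symm
    apply Finset.eq_of_subset_of_card_le
    · intro x hx
      obtain ⟨h, hm, rfl⟩ := Finset.mem_image.mp hx
      exact hmapsto h hm
    · rw [hT, Finset.card_image_of_injOn (fun a _ b _ h => by simpa using h), hStcard]
  have hdouble : ∀ x : ZMod (4*n), x + x ∈ St := by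
    intro x
    by_cases hx : x ∈ St
    · exact hadd x hx x hx
    · have hdisj : Disjoint St (St.image (· + x)) := by
        rw [Finset.disjoint_left]
        intro a haSt haIm
        obtain ⟨s, hs, rfl⟩ := Finset.mem_image.mp haIm
        apply hx
        have : (s + x) + (-s) = x := by ring
        rw [← this]
        exact hadd _ haSt _ (hneg s hs)
      have himc : (St.image (· + x)).card = 2*n := by
        rw [Finset.card_image_of_injOn (fun a _ b _ h => by simpa using h), hStcard]
      have huniv : St ∪ St.image (· + x) = Finset.univ := by
        apply Finset.eq_univ_of_card
        rw [Finset.card_union_of_disjoint hdisj, hStcard, himc, ZMod.card]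
        ring
      have : x + x ∈ St ∪ St.image (· + x) := by rw [huniv]; exact Finset.mem_univ _
      rcases Finset.mem_union.mp this with h | h
      · exact h
      · exfalso
        obtain ⟨s, hs, hsx⟩ := Finset.mem_image.mp h
        apply hx
        have : x = s := by
          have := hsx
          linear_combination - this
        rw [this]; exact hs
  have hHsub : Hfin n ⊆ St := by
    intro y hy
    obtain ⟨j, _, rfl⟩ := Finset.mem_image.mp hy
    have : ((2*j : ℕ) : ZMod (4*n)) = ((j:ℕ) : ZMod (4*n)) + ((j:ℕ) : ZMod (4*n)) := by
      push_cast; ring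
    rw [this]
    exact hdouble _
  have hHeq : Hfin n = St := by
    apply Finset.eq_of_subset_of_card_le hHsub
    rw [hStcard, card_Hfin n hn]
  rw [hTeq, hHeq]

lemma mem_coset (a x : ZMod (4*n)) :
    x ∈ (Hfin n).image (fun h => a + h) ↔ eps n (x - a) = 0 := by
  constructor
  · rintro hx
    obtain ⟨h, hm, rfl⟩ := Finset.mem_image.mp hx
    rw [show a + h - a = h by ring]
    exact (mem_Hfin n hn).mp hm
  · intro hx
    have : x - a ∈ Hfin n := (mem_Hfin n hn).mpr hx
    exact Finset.mem_image.mpr ⟨x - a, this, by ring⟩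

lemma coset_compl (a x : ZMod (4*n)) :
    x ∉ (Hfin n).image (fun h => a + h) ↔ x ∈ (Hfin n).image (fun h => (a+1) + h) := by
  haveI : NeZero (4*n) := ⟨by omega⟩
  rw [mem_coset n hn, mem_coset n hn]
  have heq : eps n (x - (a+1)) = eps n (x - a) - 1 := by
    rw [show x - (a+1) = (x - a) - 1 by ring, map_sub, map_one]
  rw [heq]
  have hz : ∀ z : ZMod 2, (¬ z = 0 ↔ z - 1 = 0) := by decide
  exact hz _

lemma coset_sum (a : ZMod (4*n)) :
    ∑ x ∈ (Hfin n).image (fun h => a + h), x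
      = ((2*n : ℕ) : ZMod (4*n)) * a + ((2*n : ℕ) : ZMod (4*n)) := by
  rw [Finset.sum_image (fun u _ v _ h => by simpa using h)]
  rw [Finset.sum_add_distrib, Finset.sum_const, card_Hfin n hn, sum_Hfin n hn,
    nsmul_eq_mul]

end

lemma lower (n : ℕ) (hn : 0 < n) (X : Set (ZMod (4*n) × ZMod (4*n)))
    (hcov : (⋃ x ∈ X, quower (4*n) x) = Set.univ) : 2*n+1 ≤ X.ncard := by
  haveI : NeZero (4*n) := ⟨by omega⟩
  classical
  by_contra hlt
  push_neg at hlt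
  have hXfin : X.Finite := Set.toFinite X
  set F := hXfin.toFinset with hF
  have hFcard : F.card = X.ncard := (Set.ncard_eq_toFinset_card X hXfin).symm
  have hk : F.card ≤ 2*n := by omega
  set A := F.image Prod.fst with hA
  set B := F.image Prod.snd with hB
  set D := F.image (fun x => x.1 - x.2) with hD
  set S := Aᶜ with hS
  set T := Bᶜ with hT
  have hcard_univ : Fintype.card (ZMod (4*n)) = 4*n := ZMod.card _
  have hcov' : ∀ p q : ZMod (4*n), ∃ x ∈ F, p - q = x.1 - x.2 ∨ q = x.2 ∨ p = x.1 := by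
    intro p q
    have hm : ((p,q) : ZMod (4*n) × ZMod (4*n)) ∈ ⋃ x ∈ X, quower (4*n) x := by
      rw [hcov]; trivial
    obtain ⟨x, hxX, hxq⟩ := Set.mem_iUnion₂.mp hm
    exact ⟨x, hXfin.mem_toFinset.mpr hxX, (mem_quower x (p,q)).mp hxq⟩
  have hST : ∀ p ∈ S, ∀ q ∈ T, p - q ∈ D := by
    intro p hp q hq
    obtain ⟨x, hxF, hca⟩ := hcov' p q
    rcases hca with h | h | h
    · exact Finset.mem_image.mpr ⟨x, hxF, h.symm⟩
    · exact absurd (Finset.mem_image.mpr ⟨x, hxF, h.symm⟩) (Finset.mem_compl.mp hq)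
    · exact absurd (Finset.mem_image.mpr ⟨x, hxF, h.symm⟩) (Finset.mem_compl.mp hp)
  have hAle : A.card ≤ 2*n := le_trans Finset.card_image_le hk
  have hBle : B.card ≤ 2*n := le_trans Finset.card_image_le hk
  have hDle : D.card ≤ 2*n := le_trans Finset.card_image_le hk
  have hScard : 2*n ≤ S.card := by rw [hS, Finset.card_compl, hcard_univ]; omega
  have hTcard : 2*n ≤ T.card := by rw [hT, Finset.card_compl, hcard_univ]; omega
  have hUc : 2*n ≤ Dᶜ.card := by rw [Finset.card_compl, hcard_univ]; omega
  have hdisj : ∀ u ∈ Dᶜ, Disjoint S (T.image (· + u)) := by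
    intro u hu
    rw [Finset.disjoint_left]
    intro s hsS hsIm
    obtain ⟨t, htT, rfl⟩ := Finset.mem_image.mp hsIm
    apply Finset.mem_compl.mp hu
    have he : (t + u) - t = u := by ring
    rw [← he]
    exact hST _ hsS _ htT
  obtain ⟨u0, hu0⟩ := Finset.card_pos.mp (show 0 < Dᶜ.card by omega)
  have himTc : ∀ u : ZMod (4*n), (T.image (· + u)).card = T.card :=
    fun u => Finset.card_image_of_injOn (fun a _ b _ h => by simpa using h)
  have himSc : ∀ u : ZMod (4*n), (S.image (· + u)).card = S.card :=
    fun u => Finset.card_image_of_injOn (fun a _ b _ h => by simpa using h)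
  have hsum_le : S.card + T.card ≤ 4*n := by
    have hd := hdisj u0 hu0
    have h1 := Finset.card_union_of_disjoint hd
    have h2 := himTc u0
    have hle : (S ∪ T.image (· + u0)).card ≤ 4*n :=
      le_trans (Finset.card_le_card (Finset.subset_univ _))
        (le_of_eq (by rw [Finset.card_univ]; exact hcard_univ))
    omega
  have hScard' : S.card = 2*n := by omega
  have hTcard' : T.card = 2*n := by omega
  have hAcard : A.card = 2*n := by
    have : S.card = 4*n - A.card := by rw [hS, Finset.card_compl, hcard_univ]
    omega
  have hBcard : B.card = 2*n := by
    have : T.card = 4*n - B.card := by rw [hT, Finset.card_compl, hcard_univ]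
    omega
  have hFc2 : F.card = 2*n := by
    have : A.card ≤ F.card := by rw [hA]; exact Finset.card_image_le.trans (le_refl _)
    omega
  have hSc : Sᶜ = A := by rw [hS, compl_compl]
  have hTc : Tᶜ = B := by rw [hT, compl_compl]
  -- translates of T land on A
  have hTu : ∀ u ∈ Dᶜ, T.image (· + u) = A := by
    intro u hu
    rw [← hSc]
    apply Finset.eq_of_subset_of_card_le
    · intro x hx
      rw [Finset.mem_compl]
      exact fun hxS => (Finset.disjoint_right.mp (hdisj u hu)) hx hxS
    · rw [Finset.card_compl, hcard_univ, himTc u]; omega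
  -- translates of S land on B
  have hdisj' : ∀ u ∈ Dᶜ, Disjoint (S.image (· + (-u))) T := by
    intro u hu
    rw [Finset.disjoint_left]
    intro a haIm haT
    obtain ⟨s, hsS, rfl⟩ := Finset.mem_image.mp haIm
    apply Finset.mem_compl.mp hu
    have he : s - (s + -u) = u := by ring
    rw [← he]
    exact hST _ hsS _ haT
  have hSu : ∀ u ∈ Dᶜ, S.image (· + (-u)) = B := by
    intro u hu
    rw [← hTc]
    apply Finset.eq_of_subset_of_card_le
    · intro x hx
      rw [Finset.mem_compl]
      exact fun hxT => (Finset.disjoint_left.mp (hdisj' u hu)) hx hxT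
    · rw [Finset.card_compl, hcard_univ, himSc]; omega
  -- stabilizer sets
  have hWT : ∀ u ∈ Dᶜ, T.image (· + (u - u0)) = T := by
    intro u hu
    have h1 : T.image (· + (u - u0)) = (T.image (· + u)).image (· + (-u0)) := by
      rw [sub_eq_add_neg, img_img n]
    rw [h1, hTu u hu, ← hTu u0 hu0, img_img n, add_neg_cancel, img_zero n]
  have hWS : ∀ u ∈ Dᶜ, S.image (· + (u0 - u)) = S := by
    intro u hu
    have h1 : S.image (· + (u0 - u)) = (S.image (· + (-u))).image (· + u0) := by
      rw [show u0 - u = -u + u0 from by ring, img_img n]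
    rw [h1, hSu u hu, ← hSu u0 hu0, img_img n, neg_add_cancel, img_zero n]
  obtain ⟨t0, ht0⟩ := Finset.card_pos.mp (show 0 < T.card by omega)
  obtain ⟨s0, hs0⟩ := Finset.card_pos.mp (show 0 < S.card by omega)
  have hWcard : 2*n ≤ (Dᶜ.image (fun u => u - u0)).card := by
    rw [Finset.card_image_of_injOn (fun a _ b _ h => sub_left_inj.mp h)]
    omega
  have hW'card : 2*n ≤ (Dᶜ.image (fun u => u0 - u)).card := by
    rw [Finset.card_image_of_injOn (fun a _ b _ h => sub_right_inj.mp h)]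
    omega
  have hTcoset : T = (Hfin n).image (fun h => t0 + h) := by
    apply stab_lemma n hn T hTcard' t0 ht0 (Dᶜ.image (fun u => u - u0)) hWcard
    rintro w hw
    obtain ⟨u, hu, rfl⟩ := Finset.mem_image.mp hw
    exact hWT u hu
  have hScoset : S = (Hfin n).image (fun h => s0 + h) := by
    apply stab_lemma n hn S hScard' s0 hs0 (Dᶜ.image (fun u => u0 - u)) hW'card
    rintro w hw
    obtain ⟨u, hu, rfl⟩ := Finset.mem_image.mp hw
    exact hWS u hu
  -- A, B, D as cosets
  have hAco : A = (Hfin n).image (fun h => (s0+1) + h) := by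
    ext x
    have h1 : x ∈ A ↔ ¬ x ∈ S := by rw [hS, Finset.mem_compl, not_not]
    rw [h1, hScoset]
    exact coset_compl n hn s0 x
  have hBco : B = (Hfin n).image (fun h => (t0+1) + h) := by
    ext x
    have h1 : x ∈ B ↔ ¬ x ∈ T := by rw [hT, Finset.mem_compl, not_not]
    rw [h1, hTcoset]
    exact coset_compl n hn t0 x
  have hDco : D = (Hfin n).image (fun h => (s0 - t0) + h) := by
    apply Finset.Subset.antisymm
    · intro x hx
      obtain ⟨f, hf, rfl⟩ := Finset.mem_image.mp hx
      have hf1 : f.1 ∈ A := Finset.mem_image_of_mem _ hf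
      have hf2 : f.2 ∈ B := Finset.mem_image_of_mem _ hf
      rw [hAco] at hf1
      rw [hBco] at hf2
      obtain ⟨h1, hh1, he1⟩ := Finset.mem_image.mp hf1
      obtain ⟨h2, hh2, he2⟩ := Finset.mem_image.mp hf2
      apply Finset.mem_image.mpr
      refine ⟨h1 - h2 + (s0 - t0) - (s0 - t0), ?_, ?_⟩
      · have : h1 - h2 + (s0 - t0) - (s0 - t0) = h1 - h2 := by ring
        rw [this]
        apply (mem_Hfin n hn).mpr
        rw [map_sub, (mem_Hfin n hn).mp hh1, (mem_Hfin n hn).mp hh2, sub_zero]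
      · rw [← he1, ← he2]; ring
    · intro x hx
      obtain ⟨h, hh, rfl⟩ := Finset.mem_image.mp hx
      have hsh : s0 + h ∈ S := by
        rw [hScoset]; exact Finset.mem_image_of_mem _ hh
      have hd : (s0 + h) - t0 ∈ D := hST _ hsh _ ht0
      have he : (s0 + h) - t0 = (s0 - t0) + h := by ring
      rwa [he] at hd
  -- injectivity for sums
  have hDcard : D.card = 2*n := by
    rw [hDco, Finset.card_image_of_injOn (fun a _ b _ h => by simpa using h),
      card_Hfin n hn]
  have hfstinj : ∀ x ∈ F, ∀ y ∈ F, x.1 = y.1 → x = y := by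
    have := Finset.card_image_iff.mp (by rw [← hA, hAcard, hFc2] : (F.image Prod.fst).card = F.card)
    intro x hx y hy hxy
    exact this (Finset.mem_coe.mpr hx) (Finset.mem_coe.mpr hy) hxy
  have hsndinj : ∀ x ∈ F, ∀ y ∈ F, x.2 = y.2 → x = y := by
    have := Finset.card_image_iff.mp (by rw [← hB, hBcard, hFc2] : (F.image Prod.snd).card = F.card)
    intro x hx y hy hxy
    exact this (Finset.mem_coe.mpr hx) (Finset.mem_coe.mpr hy) hxy
  have hdinj : ∀ x ∈ F, ∀ y ∈ F, x.1 - x.2 = y.1 - y.2 → x = y := by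
    have := Finset.card_image_iff.mp (by rw [← hD, hDcard, hFc2] :
      (F.image (fun x => x.1 - x.2)).card = F.card)
    intro x hx y hy hxy
    exact this (Finset.mem_coe.mpr hx) (Finset.mem_coe.mpr hy) hxy
  have hsumA : ∑ a ∈ A, a = ∑ f ∈ F, f.1 := Finset.sum_image hfstinj
  have hsumB : ∑ b ∈ B, b = ∑ f ∈ F, f.2 := Finset.sum_image hsndinj
  have hsumD : ∑ d ∈ D, d = ∑ f ∈ F, (f.1 - f.2) := Finset.sum_image hdinj
  have hsplit : ∑ f ∈ F, (f.1 - f.2) = ∑ f ∈ F, f.1 - ∑ f ∈ F, f.2 :=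
    Finset.sum_sub_distrib (fun f : ZMod (4*n) × ZMod (4*n) => f.1) (fun f => f.2)
  have hkey : ∑ d ∈ D, d = ∑ a ∈ A, a - ∑ b ∈ B, b := by
    rw [hsumA, hsumB, hsumD, hsplit]
  rw [hAco, hBco, hDco, coset_sum n hn, coset_sum n hn, coset_sum n hn] at hkey
  have hzero : ((2*n : ℕ) : ZMod (4*n)) = 0 := by linear_combination hkey
  rw [ZMod.natCast_eq_zero_iff] at hzero
  have := Nat.le_of_dvd (by omega) hzero
  omega

theorem stmt_8 (n : ℕ) (hn : 0 < n) : xi (4 * n) = 2 * n + 1 := by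
  unfold xi
  obtain ⟨X, hX1, hX2⟩ := upper n hn
  apply le_antisymm
  · apply Nat.sInf_le
    exact ⟨X, hX1, hX2⟩
  · apply le_csInf
    · exact ⟨2*n+1, X, hX1, hX2⟩
    rintro b ⟨Y, hY1, hY2⟩
    rw [← hY1]
    exact lower n hn Y hY2
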